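/- Let ω = (−1+√3 i)/2 and, for λ ∈ ℂ ∖ {0, 1, −ω²}, set N(λ) = 3√3 i · λ(1−λ)/(λ+ω²)³. Then for every λ ∈ ℂ ∖ {0, 1, −ω, −ω²}: λ/(λ−1) lies in ℂ ∖ {0, 1, −ω²}, N(λ) ≠ 1, and N(λ/(λ−1)) = N(λ)/(N(λ) − 1). -/

import Mathlib

open Complex

/-- `ω = (−1 + √3 i)/2`, the primitive cube root of unity in the upper half-plane. -/
noncomputable def omegaC : ℂ := (-1 + Real.sqrt 3 * Complex.I) / 2

/-- The rational function `N(λ) = 3√3 i λ(1−λ)/(λ+ω²)³`. -/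
noncomputable def Nfn (l : ℂ) : ℂ :=
  3 * Real.sqrt 3 * Complex.I * (l * (1 - l)) / (l + omegaC ^ 2) ^ 3

/-- Transformation of `N` under `λ ↦ λ/(λ−1)`. -/
theorem N_T_action (l : ℂ) (h0 : l ≠ 0) (h1 : l ≠ 1)
    (h2 : l ≠ -omegaC) (h3 : l ≠ -omegaC ^ 2) :
    (l/(l - 1) ≠ 0 ∧ l/(l - 1) ≠ 1 ∧ l/(l - 1) ≠ -omegaC ^ 2) ∧
    Nfn l ≠ 1 ∧
    Nfn (l/(l - 1)) = Nfn l / (Nfn l - 1) := by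
  have hs : (Real.sqrt 3 : ℂ)^2 = 3 := by
    rw [← Complex.ofReal_pow, Real.sq_sqrt (by norm_num : (0:ℝ) ≤ 3)]; norm_num
  have hw : omegaC^2 + omegaC + 1 = 0 := by
    unfold omegaC
    linear_combination (-1/4 : ℂ) * hs + ((Real.sqrt 3:ℂ)^2/4) * Complex.I_sq
  have hsI : (Real.sqrt 3:ℂ) * Complex.I = 2*omegaC + 1 := by unfold omegaC; ring
  have hd1 : l - 1 ≠ 0 := sub_ne_zero.mpr h1
  have hA : l + omegaC ≠ 0 := fun h => h2 (eq_neg_of_add_eq_zero_left h)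
  have hB : l + omegaC^2 ≠ 0 := fun h => h3 (eq_neg_of_add_eq_zero_left h)
  have hc : l/(l-1) ≠ -omegaC^2 := by
    intro h
    have E : l = -omegaC^2 * (l-1) := (div_eq_iff hd1).mp h
    exact h2 (by linear_combination (-omegaC^2) * E +
      (l*(omegaC^2 - omegaC + 1) - omegaC*(omegaC-1)) * hw)
  have hb : l/(l-1) ≠ 1 := by
    intro h
    have h' := (div_eq_one_iff_eq hd1).mp h
    exact one_ne_zero (by linear_combination h' : (1:ℂ) = 0)
  have key : (l + omegaC^2)^3 = 3*(Real.sqrt 3:ℂ)*Complex.I*(l*(1-l)) + (l + omegaC)^3 := by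
    linear_combination (-3*l*(1-l)) * hsI +
      (3*l^2 + 3*l*(omegaC^2 - omegaC - 1) + omegaC^4 - omegaC^3) * hw
  have hNm1 : Nfn l - 1 = -((l+omegaC)^3)/((l+omegaC^2)^3) := by
    unfold Nfn
    field_simp
    linear_combination -key
  have hN1 : Nfn l ≠ 1 := by
    intro h
    rw [h, sub_self] at hNm1
    rcases div_eq_zero_iff.mp hNm1.symm with h' | h'
    · exact pow_ne_zero 3 hA (neg_eq_zero.mp h')
    · exact pow_ne_zero 3 hB h'
  refine ⟨⟨div_ne_zero h0 hd1, hb, hc⟩, hN1, ?_⟩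
  have hB' : l/(l-1) + omegaC^2 ≠ 0 := fun h => hc (eq_neg_of_add_eq_zero_left h)
  have hE : l + omegaC^2*(l-1) ≠ 0 := by
    have hq : l/(l-1) + omegaC^2 = (l + omegaC^2*(l-1))/(l-1) := by field_simp
    intro h; apply hB'; rw [hq, h, zero_div]
  rw [hNm1]
  unfold Nfn
  field_simp [show l + (l-1)*omegaC^2 ≠ 0 by rwa [mul_comm]]
  linear_combination (-(l-1)*(-(omegaC-1)*(l+omegaC)^3 + 3*omegaC^2*(l+omegaC)^2*l - 3*omegaC*(l+omegaC)*l^2*(omegaC^2+omegaC+1) + l^3*(omegaC^2+omegaC+1)^2)) * hw
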